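/- Let id be the n-rook with id(i) = i for all i and let w₀ be the n-rook with w₀(i) = n+1−i for all i. Then for every 2n-rook x, the relations ι(id) ≤ x ≤ ι(w₀) hold in the Bruhat–Chevalley–Renner order on 2n-rooks if and only if x = ι(w) for some permutation w of {1,…,n} (an n-rook with all values nonzero); consequently the interval [ι(id), ι(w₀)] in the poset of 2n-rooks is order-isomorphic to the symmetric group S_n equipped with the restriction of the Bruhat–Chevalley–Renner order (the Bruhat order). -/

import Mathlib

open scoped Classical

/-- An `n`-rook in one-line notation: a function `a : Fin n → ℕ` (position `i`
represents position `i+1` in 1-based notation) with values in `{0,…,n}`, whose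
nonzero values are pairwise distinct. `a i = 0` means position `i` is vacant. -/
def IsRook (n : ℕ) (a : Fin n → ℕ) : Prop :=
  (∀ i, a i ≤ n) ∧ ∀ i j, a i ≠ 0 → a i = a j → i = j

/-- The rank of a rook: the number of nonzero entries. -/
def rookRank (n : ℕ) (a : Fin n → ℕ) : ℕ :=
  (Finset.univ.filter (fun i => a i ≠ 0)).card

/-- `inv(a) = #{(i,j) : i < j ∧ a i > a j}`. -/
def rookInv (n : ℕ) (a : Fin n → ℕ) : ℕ :=
  (Finset.univ.filter (fun p : Fin n × Fin n => p.1 < p.2 ∧ a p.2 < a p.1)).card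

/-- `coinv(a) = #{(i,j) : i < j ∧ 0 < a i < a j}`. -/
def rookCoinv (n : ℕ) (a : Fin n → ℕ) : ℕ :=
  (Finset.univ.filter (fun p : Fin n × Fin n => p.1 < p.2 ∧ 0 < a p.1 ∧ a p.1 < a p.2)).card

/-- The length `ℓ(a) = Σ a i + inv(a)`. -/
def rookLen (n : ℕ) (a : Fin n → ℕ) : ℕ :=
  (∑ i, a i) + rookInv n a
/-- The generating relations of the Bruhat–Chevalley–Renner order on `n`-rooks. -/
def BCRStep (n : ℕ) (a b : Fin n → ℕ) : Prop :=
  IsRook n a ∧ IsRook n b ∧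
  ((∃ i, a i < b i ∧ ∀ j, j ≠ i → a j = b j) ∨
   (∃ i j : Fin n, i < j ∧ b i = a j ∧ b j = a i ∧ b j < b i ∧
      ∀ m, m ≠ i → m ≠ j → a m = b m))

/-- The Bruhat–Chevalley–Renner order: the partial order on `n`-rooks generated by
the relations `BCRStep`. -/
def BCRle (n : ℕ) : (Fin n → ℕ) → (Fin n → ℕ) → Prop :=
  Relation.ReflTransGen (BCRStep n)

/-- The map `ι` sending an `n`-rook `σ` to the `2n`-rook which is `0` on the
first `n` positions and `σ` on the last `n` positions. -/
def iota (n : ℕ) (σ : Fin n → ℕ) : Fin (2 * n) → ℕ :=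
  fun i => if h : n ≤ (i : ℕ) then σ ⟨(i : ℕ) - n, by have := i.isLt; omega⟩ else 0

/-- The identity rook `id(i) = i` (0-based: `id i = i + 1`). -/
def idRook (n : ℕ) : Fin n → ℕ := fun i => i.val + 1

/-- The longest permutation `w₀`, with `w₀(i) = n+1−i` (0-based: `w₀ i = n − i`). -/
def lastRook (n : ℕ) : Fin n → ℕ := fun i => n - i.val

/-- The `n`-rook of a permutation `w` of `{1,…,n}`: all values nonzero. -/
def permRook (n : ℕ) (w : Equiv.Perm (Fin n)) : Fin n → ℕ := fun i => (w i : ℕ) + 1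

-- ====== auxiliary development ======

def PRook (n : ℕ) (a : Fin n → ℕ) : Prop :=
  (∀ i, 1 ≤ a i ∧ a i ≤ n) ∧ Function.Injective a

lemma PRook.isRook {n a} (h : PRook n a) : IsRook n a :=
  ⟨fun i => (h.1 i).2, fun i j _ hij => h.2 hij⟩

lemma pRook_permRook (n : ℕ) (w : Equiv.Perm (Fin n)) : PRook n (permRook n w) := by
  constructor
  · intro i; have := (w i).isLt; simp only [permRook]; omega
  · intro i j h
    have : w i = w j := Fin.ext (by simpa [permRook] using h)
    exact w.injective this

lemma pRook_exists_perm {n a} (h : PRook n a) : ∃ w : Equiv.Perm (Fin n), a = permRook n w := by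
  have hb : ∀ i, a i - 1 < n := fun i => by have := h.1 i; omega
  set f : Fin n → Fin n := fun i => ⟨a i - 1, hb i⟩ with hf
  have hinj : Function.Injective f := by
    intro i j hij
    apply h.2
    have h1 := (h.1 i).1; have h2 := (h.1 j).1
    have : a i - 1 = a j - 1 := congrArg Fin.val hij
    omega
  refine ⟨Equiv.ofBijective f (Finite.injective_iff_bijective.mp hinj), ?_⟩
  funext i
  have h1 := (h.1 i).1
  simp only [permRook, Equiv.ofBijective_apply, hf]
  omega

-- swap helpers
section Swap
variable {n : ℕ} (a : Fin n → ℕ) (i j : Fin n)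

/-- `a` with entries at `i` and `j` swapped. -/
def swapRook : Fin n → ℕ := fun m => a (Equiv.swap i j m)

lemma swapRook_apply_left : swapRook a i j i = a j := by
  simp [swapRook]

lemma swapRook_apply_right : swapRook a i j j = a i := by
  simp [swapRook]

lemma swapRook_apply_of_ne {m : Fin n} (h1 : m ≠ i) (h2 : m ≠ j) :
    swapRook a i j m = a m := by
  simp [swapRook, Equiv.swap_apply_of_ne_of_ne h1 h2]

lemma swapRook_pRook (h : PRook n a) : PRook n (swapRook a i j) :=
  ⟨fun m => h.1 _, h.2.comp (Equiv.swap i j).injective⟩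

/-- for adjacent `i j`, swapping preserves order of any pair other than `(i,j)`. -/
lemma swap_lt_swap {p q : Fin n} (hij : (i : ℕ) + 1 = j) (hpq : p < q)
    (hne : ¬(p = i ∧ q = j)) : Equiv.swap i j p < Equiv.swap i j q := by
  have hij' : i ≠ j := by intro h; rw [h] at hij; omega
  rw [Fin.lt_def] at hpq ⊢
  simp only [Equiv.swap_apply_def]
  have hpe := Fin.ext_iff (a := p) (b := i)
  have hpe2 := Fin.ext_iff (a := p) (b := j)
  have hqe := Fin.ext_iff (a := q) (b := i)
  have hqe2 := Fin.ext_iff (a := q) (b := j)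
  have : ¬((p : ℕ) = i ∧ (q : ℕ) = j) := by
    intro ⟨h1, h2⟩; exact hne ⟨Fin.ext h1, Fin.ext h2⟩
  split_ifs with h1 h2 h3 h4 h5 h6 h7 h8 <;>
    simp_all [Fin.ext_iff] <;> omega

end Swap

section SwapCount
variable {n : ℕ} {a : Fin n → ℕ} {i j : Fin n}

lemma coinv_swapRook_lt (hij : (i : ℕ) + 1 = j) (hpos : 0 < a i) (hlt : a i < a j) :
    rookCoinv n (swapRook a i j) < rookCoinv n a := by
  classical
  set s := Equiv.swap i j with hs
  have hijlt : i < j := by rw [Fin.lt_def]; omega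
  set S := (Finset.univ.filter
      (fun p : Fin n × Fin n => p.1 < p.2 ∧ 0 < a p.1 ∧ a p.1 < a p.2)) with hS
  set T := (Finset.univ.filter
      (fun p : Fin n × Fin n => p.1 < p.2 ∧ 0 < swapRook a i j p.1 ∧
        swapRook a i j p.1 < swapRook a i j p.2)) with hT
  have hmem : (i, j) ∈ S := by
    simp only [hS, Finset.mem_filter, Finset.mem_univ, true_and]
    exact ⟨hijlt, hpos, hlt⟩
  have key : T.card ≤ (S.erase (i, j)).card := by
    apply Finset.card_le_card_of_injOn (fun p => (s p.1, s p.2))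
    · intro p hp
      simp only [Finset.mem_coe, hT, Finset.mem_filter, Finset.mem_univ, true_and] at hp
      obtain ⟨h1, h2, h3⟩ := hp
      have hne : ¬(p.1 = i ∧ p.2 = j) := by
        rintro ⟨e1, e2⟩
        rw [e1, e2] at h3
        rw [swapRook_apply_left, swapRook_apply_right] at h3
        omega
      have hord : s p.1 < s p.2 := swap_lt_swap i j hij h1 hne
      have hmemS : (s p.1, s p.2) ∈ S := by
        simp only [hS, Finset.mem_filter, Finset.mem_univ, true_and]
        exact ⟨hord, h2, h3⟩
      refine Finset.mem_erase.mpr ⟨?_, hmemS⟩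
      intro heq
      have e1 : s p.1 = i := congrArg Prod.fst heq
      have e2 : s p.2 = j := congrArg Prod.snd heq
      have e3 : p.1 = j := s.injective (by rw [e1, hs, Equiv.swap_apply_right])
      have e4 : p.2 = i := s.injective (by rw [e2, hs, Equiv.swap_apply_left])
      rw [e3, e4] at h1
      exact absurd (h1.trans hijlt) (lt_irrefl _)
    · intro p _ q _ h
      have e1 : s p.1 = s q.1 := congrArg Prod.fst h
      have e2 : s p.2 = s q.2 := congrArg Prod.snd h
      exact Prod.ext (s.injective e1) (s.injective e2)
  have hcard : 0 < S.card := Finset.card_pos.mpr ⟨_, hmem⟩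
  have := Finset.card_erase_of_mem hmem
  simp only [rookCoinv, ← hS, ← hT]
  omega

lemma inv_swapRook_lt (hij : (i : ℕ) + 1 = j) (hlt : a j < a i) :
    rookInv n (swapRook a i j) < rookInv n a := by
  classical
  set s := Equiv.swap i j with hs
  have hijlt : i < j := by rw [Fin.lt_def]; omega
  set S := (Finset.univ.filter
      (fun p : Fin n × Fin n => p.1 < p.2 ∧ a p.2 < a p.1)) with hS
  set T := (Finset.univ.filter
      (fun p : Fin n × Fin n => p.1 < p.2 ∧ swapRook a i j p.2 < swapRook a i j p.1)) with hT
  have hmem : (i, j) ∈ S := by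
    simp only [hS, Finset.mem_filter, Finset.mem_univ, true_and]
    exact ⟨hijlt, hlt⟩
  have key : T.card ≤ (S.erase (i, j)).card := by
    apply Finset.card_le_card_of_injOn (fun p => (s p.1, s p.2))
    · intro p hp
      simp only [Finset.mem_coe, hT, Finset.mem_filter, Finset.mem_univ, true_and] at hp
      obtain ⟨h1, h3⟩ := hp
      have hne : ¬(p.1 = i ∧ p.2 = j) := by
        rintro ⟨e1, e2⟩
        rw [e1, e2] at h3
        rw [swapRook_apply_left, swapRook_apply_right] at h3
        omega
      have hord : s p.1 < s p.2 := swap_lt_swap i j hij h1 hne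
      have hmemS : (s p.1, s p.2) ∈ S := by
        simp only [hS, Finset.mem_filter, Finset.mem_univ, true_and]
        exact ⟨hord, h3⟩
      refine Finset.mem_erase.mpr ⟨?_, hmemS⟩
      intro heq
      have e1 : s p.1 = i := congrArg Prod.fst heq
      have e2 : s p.2 = j := congrArg Prod.snd heq
      have e3 : p.1 = j := s.injective (by rw [e1, hs, Equiv.swap_apply_right])
      have e4 : p.2 = i := s.injective (by rw [e2, hs, Equiv.swap_apply_left])
      rw [e3, e4] at h1
      exact absurd (h1.trans hijlt) (lt_irrefl _)
    · intro p _ q _ h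
      have e1 : s p.1 = s q.1 := congrArg Prod.fst h
      have e2 : s p.2 = s q.2 := congrArg Prod.snd h
      exact Prod.ext (s.injective e1) (s.injective e2)
  have hcard : 0 < S.card := Finset.card_pos.mpr ⟨_, hmem⟩
  have := Finset.card_erase_of_mem hmem
  simp only [rookInv, ← hS, ← hT]
  omega

end SwapCount

section Extremal
variable {n : ℕ} {a : Fin n → ℕ}

lemma eq_lastRook_of_decreasing (hb : ∀ i, 1 ≤ a i ∧ a i ≤ n)
    (hd : ∀ (k : ℕ) (h : k + 1 < n), a ⟨k + 1, h⟩ < a ⟨k, by omega⟩) :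
    a = lastRook n := by
  have claim1 : ∀ (k : ℕ) (h : k < n), a ⟨k, h⟩ + k ≤ n := by
    intro k
    induction k with
    | zero => intro h; simpa using (hb ⟨0, h⟩).2
    | succ k ih =>
      intro h
      have h1 := ih (by omega)
      have h2 := hd k h
      omega
  have claim2 : ∀ (d k : ℕ) (h : k < n), k + d + 1 = n → n ≤ a ⟨k, h⟩ + k := by
    intro d
    induction d with
    | zero => intro k h hk; have := (hb ⟨k, h⟩).1; omega
    | succ d ih =>
      intro k h hk
      have h1 : k + 1 < n := by omega
      have h2 := ih (k + 1) h1 (by omega)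
      have h3 := hd k h1
      omega
  funext i
  have h1 := claim1 i.val i.isLt
  have h2 := claim2 (n - 1 - i.val) i.val i.isLt (by have := i.isLt; omega)
  simp only [Fin.eta] at h1 h2
  simp only [lastRook]
  omega

lemma eq_idRook_of_increasing (hb : ∀ i, 1 ≤ a i ∧ a i ≤ n)
    (hd : ∀ (k : ℕ) (h : k + 1 < n), a ⟨k, by omega⟩ < a ⟨k + 1, h⟩) :
    a = idRook n := by
  have claim1 : ∀ (k : ℕ) (h : k < n), k + 1 ≤ a ⟨k, h⟩ := by
    intro k
    induction k with
    | zero => intro h; exact (hb ⟨0, h⟩).1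
    | succ k ih =>
      intro h
      have h1 := ih (by omega)
      have h2 := hd k h
      omega
  have claim2 : ∀ (d k : ℕ) (h : k < n), k + d + 1 = n → a ⟨k, h⟩ ≤ k + 1 := by
    intro d
    induction d with
    | zero => intro k h hk; have := (hb ⟨k, h⟩).2; omega
    | succ d ih =>
      intro k h hk
      have h1 : k + 1 < n := by omega
      have h2 := ih (k + 1) h1 (by omega)
      have h3 := hd k h1
      omega
  funext i
  have h1 := claim1 i.val i.isLt
  have h2 := claim2 (n - 1 - i.val) i.val i.isLt (by have := i.isLt; omega)
  simp only [Fin.eta] at h1 h2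
  simp only [idRook]
  omega

lemma exists_ascent (hP : PRook n a) (hne : a ≠ lastRook n) :
    ∃ (k : ℕ) (h : k + 1 < n), a ⟨k, by omega⟩ < a ⟨k + 1, h⟩ := by
  by_contra hcon
  push_neg at hcon
  apply hne
  apply eq_lastRook_of_decreasing hP.1
  intro k h
  have h1 := hcon k h
  have h2 : a ⟨k, by omega⟩ ≠ a ⟨k + 1, h⟩ := by
    intro he
    have := hP.2 he
    simp [Fin.ext_iff] at this
  omega

lemma exists_descent (hP : PRook n a) (hne : a ≠ idRook n) :
    ∃ (k : ℕ) (h : k + 1 < n), a ⟨k + 1, h⟩ < a ⟨k, by omega⟩ := by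
  by_contra hcon
  push_neg at hcon
  apply hne
  apply eq_idRook_of_increasing hP.1
  intro k h
  have h1 := hcon k h
  have h2 : a ⟨k, by omega⟩ ≠ a ⟨k + 1, h⟩ := by
    intro he
    have := hP.2 he
    simp [Fin.ext_iff] at this
  omega

end Extremal

section Chains
variable {n : ℕ} {a : Fin n → ℕ}

lemma step_swap_up (hP : PRook n a) (i j : Fin n) (hij : (i : ℕ) + 1 = j)
    (hlt : a i < a j) : BCRStep n a (swapRook a i j) := by
  refine ⟨hP.isRook, (swapRook_pRook a i j hP).isRook, Or.inr ⟨i, j, ?_, ?_, ?_, ?_, ?_⟩⟩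
  · rw [Fin.lt_def]; omega
  · exact swapRook_apply_left a i j
  · exact swapRook_apply_right a i j
  · rw [swapRook_apply_left, swapRook_apply_right]; exact hlt
  · intro m h1 h2; exact (swapRook_apply_of_ne a i j h1 h2).symm

lemma step_swap_down (hP : PRook n a) (i j : Fin n) (hij : (i : ℕ) + 1 = j)
    (hlt : a j < a i) : BCRStep n (swapRook a i j) a := by
  refine ⟨(swapRook_pRook a i j hP).isRook, hP.isRook, Or.inr ⟨i, j, ?_, ?_, ?_, ?_, ?_⟩⟩
  · rw [Fin.lt_def]; omega
  · exact (swapRook_apply_right a i j).symm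
  · exact (swapRook_apply_left a i j).symm
  · exact hlt
  · intro m h1 h2; exact swapRook_apply_of_ne a i j h1 h2

lemma le_last_aux : ∀ (N : ℕ) (a : Fin n → ℕ), rookCoinv n a = N → PRook n a →
    BCRle n a (lastRook n) := by
  intro N
  induction N using Nat.strong_induction_on with
  | _ N IH =>
    intro a hN hP
    by_cases h : a = lastRook n
    · rw [h]; exact Relation.ReflTransGen.refl
    · obtain ⟨k, hk, hlt⟩ := exists_ascent hP h
      set i : Fin n := ⟨k, by omega⟩ with hi
      set j : Fin n := ⟨k + 1, hk⟩ with hj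
      have hij : (i : ℕ) + 1 = j := rfl
      have hstep := step_swap_up hP i j hij hlt
      have hlt' := coinv_swapRook_lt hij (hP.1 i).1 hlt
      exact Relation.ReflTransGen.head hstep
        (IH _ (by omega) _ rfl (swapRook_pRook a i j hP))

lemma pRook_le_last (hP : PRook n a) : BCRle n a (lastRook n) :=
  le_last_aux _ a rfl hP

lemma id_le_aux : ∀ (N : ℕ) (a : Fin n → ℕ), rookInv n a = N → PRook n a →
    BCRle n (idRook n) a := by
  intro N
  induction N using Nat.strong_induction_on with
  | _ N IH =>
    intro a hN hP
    by_cases h : a = idRook n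
    · rw [h]; exact Relation.ReflTransGen.refl
    · obtain ⟨k, hk, hlt⟩ := exists_descent hP h
      set i : Fin n := ⟨k, by omega⟩ with hi
      set j : Fin n := ⟨k + 1, hk⟩ with hj
      have hij : (i : ℕ) + 1 = j := rfl
      have hstep := step_swap_down hP i j hij hlt
      have hlt' := inv_swapRook_lt hij hlt
      exact Relation.ReflTransGen.tail
        (IH _ (by omega) _ rfl (swapRook_pRook a i j hP)) hstep

lemma id_le_pRook (hP : PRook n a) : BCRle n (idRook n) a :=
  id_le_aux _ a rfl hP

end Chains

section Iota
variable {n : ℕ}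

def emb (i : Fin n) : Fin (2 * n) := ⟨n + i.val, by have := i.isLt; omega⟩

lemma iota_emb (σ : Fin n → ℕ) (i : Fin n) : iota n σ (emb i) = σ i := by
  have h : n ≤ ((emb i : Fin (2 * n)) : ℕ) := by simp [emb]
  rw [iota, dif_pos h]
  congr 1
  apply Fin.ext
  simp [emb]

lemma iota_lt (σ : Fin n → ℕ) {i : Fin (2 * n)} (h : (i : ℕ) < n) : iota n σ i = 0 := by
  rw [iota, dif_neg (by omega)]

lemma iota_ge (σ : Fin n → ℕ) {i : Fin (2 * n)} (h : n ≤ (i : ℕ)) :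
    iota n σ i = σ ⟨(i : ℕ) - n, by have := i.isLt; omega⟩ := by
  rw [iota, dif_pos h]

lemma emb_sub {i : Fin (2 * n)} (h : n ≤ (i : ℕ)) :
    emb (⟨(i : ℕ) - n, by have := i.isLt; omega⟩ : Fin n) = i := by
  apply Fin.ext; simp [emb]; omega

lemma iota_injective : Function.Injective (iota n) := by
  intro a b h
  funext i
  have := congrFun h (emb i)
  rwa [iota_emb, iota_emb] at this

lemma isRook_iota {a : Fin n → ℕ} (h : IsRook n a) : IsRook (2 * n) (iota n a) := by
  constructor
  · intro i
    by_cases hi : n ≤ (i : ℕ)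
    · rw [iota_ge a hi]; have := h.1 ⟨(i : ℕ) - n, by have := i.isLt; omega⟩; omega
    · rw [iota_lt a (by omega)]; omega
  · intro i j hne heq
    have hi : n ≤ (i : ℕ) := by
      by_contra hc; rw [iota_lt a (by omega)] at hne; exact hne rfl
    have hj : n ≤ (j : ℕ) := by
      by_contra hc
      rw [iota_lt (σ := a) (i := j) (by omega)] at heq
      exact hne heq
    rw [iota_ge a hi] at hne heq
    rw [iota_ge a hj] at heq
    have := h.2 _ _ hne heq
    have := congrArg Fin.val this
    simp only at this
    apply Fin.ext
    omega

lemma step_iota {a b : Fin n → ℕ} (h : BCRStep n a b) :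
    BCRStep (2 * n) (iota n a) (iota n b) := by
  obtain ⟨ha, hb, hcase⟩ := h
  refine ⟨isRook_iota ha, isRook_iota hb, ?_⟩
  rcases hcase with ⟨i, hlt, heq⟩ | ⟨i, j, hij, h1, h2, h3, heq⟩
  · left
    refine ⟨emb i, by rw [iota_emb, iota_emb]; exact hlt, ?_⟩
    intro j hne
    by_cases hj : n ≤ (j : ℕ)
    · rw [iota_ge a hj, iota_ge b hj]
      apply heq
      intro he
      apply hne
      rw [← emb_sub hj, he]
    · rw [iota_lt a (by omega), iota_lt b (by omega)]
  · right
    refine ⟨emb i, emb j, ?_, ?_, ?_, ?_, ?_⟩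
    · rw [Fin.lt_def] at hij ⊢; simp only [emb]; omega
    · rw [iota_emb, iota_emb]; exact h1
    · rw [iota_emb, iota_emb]; exact h2
    · rw [iota_emb, iota_emb]; exact h3
    · intro m hm1 hm2
      by_cases hm : n ≤ (m : ℕ)
      · rw [iota_ge a hm, iota_ge b hm]
        apply heq
        · intro he; apply hm1; rw [← emb_sub hm, he]
        · intro he; apply hm2; rw [← emb_sub hm, he]
      · rw [iota_lt a (by omega), iota_lt b (by omega)]

lemma le_iota {a b : Fin n → ℕ} (h : BCRle n a b) :
    BCRle (2 * n) (iota n a) (iota n b) :=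
  Relation.ReflTransGen.lift (iota n) (fun _ _ => step_iota) _ _ h

lemma step_unlift {a b : Fin n → ℕ} (ha : IsRook n a) (hb : IsRook n b)
    (h : BCRStep (2 * n) (iota n a) (iota n b)) : BCRStep n a b := by
  obtain ⟨_, _, hcase⟩ := h
  refine ⟨ha, hb, ?_⟩
  rcases hcase with ⟨i, hlt, heq⟩ | ⟨i, j, hij, h1, h2, h3, heq⟩
  · left
    have hi : n ≤ (i : ℕ) := by
      by_contra hc
      rw [iota_lt a (by omega), iota_lt b (by omega)] at hlt
      omega
    set i' : Fin n := ⟨(i : ℕ) - n, by have := i.isLt; omega⟩ with hi'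
    refine ⟨i', ?_, ?_⟩
    · rw [iota_ge a hi, iota_ge b hi] at hlt; exact hlt
    · intro j' hne
      have := heq (emb j') (by
        intro he; apply hne; apply Fin.ext
        have := congrArg Fin.val he
        simp only [emb, hi'] at this ⊢; omega)
      rwa [iota_emb, iota_emb] at this
  · right
    have hipos : 0 < iota n b i := by omega
    have hi : n ≤ (i : ℕ) := by
      by_contra hc; rw [iota_lt b (by omega)] at hipos; omega
    have hj : n ≤ (j : ℕ) := by rw [Fin.lt_def] at hij; omega
    set i' : Fin n := ⟨(i : ℕ) - n, by have := i.isLt; omega⟩ with hi'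
    set j' : Fin n := ⟨(j : ℕ) - n, by have := j.isLt; omega⟩ with hj'
    refine ⟨i', j', ?_, ?_, ?_, ?_, ?_⟩
    · rw [Fin.lt_def] at hij ⊢; simp only [hi', hj']; omega
    · rw [iota_ge b hi, iota_ge a hj] at h1; exact h1
    · rw [iota_ge b hj, iota_ge a hi] at h2; exact h2
    · rw [iota_ge b hi, iota_ge b hj] at h3; exact h3
    · intro m hm1 hm2
      have := heq (emb m)
        (by intro he; apply hm1; apply Fin.ext
            have := congrArg Fin.val he
            simp only [emb, hi'] at this ⊢; omega)
        (by intro he; apply hm2; apply Fin.ext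
            have := congrArg Fin.val he
            simp only [emb, hj'] at this ⊢; omega)
      rwa [iota_emb, iota_emb] at this

end Iota

section Count
variable {N : ℕ}

noncomputable def cnt (N : ℕ) (P : Fin N → Prop) (S : ℕ → Prop) (a : Fin N → ℕ) : ℕ :=
  (Finset.univ.filter (fun i => P i ∧ S (a i))).card

lemma ite_pair_ineq (A B C D : Prop) [Decidable A] [Decidable B] [Decidable C] [Decidable D]
    (h1 : A → C) (h2 : B → C) (h3 : A → B → D) :
    (if A then 1 else 0) + (if B then 1 else 0) ≤
      (if C then (1:ℕ) else 0) + (if D then 1 else 0) := by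
  split_ifs <;> first | omega | tauto

lemma sum_two_point (f g : Fin N → ℕ) (i j : Fin N) (hij : i ≠ j)
    (hoff : ∀ m, m ≠ i → m ≠ j → f m = g m) (hpair : f i + f j ≤ g i + g j) :
    ∑ m, f m ≤ ∑ m, g m := by
  classical
  have hjmem : j ∈ (Finset.univ.erase i) := Finset.mem_erase.mpr ⟨hij.symm, Finset.mem_univ j⟩
  have key : ∀ h : Fin N → ℕ,
      ∑ m, h m = ∑ m ∈ ((Finset.univ.erase i).erase j), h m + h j + h i := by
    intro h
    rw [Finset.sum_erase_add _ _ hjmem, Finset.sum_erase_add _ _ (Finset.mem_univ i)]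
  rw [key f, key g]
  have : ∑ m ∈ ((Finset.univ.erase i).erase j), f m
      = ∑ m ∈ ((Finset.univ.erase i).erase j), g m := by
    apply Finset.sum_congr rfl
    intro m hm
    rw [Finset.mem_erase, Finset.mem_erase] at hm
    exact hoff m hm.2.1 hm.1
  omega

lemma cnt_step_le {P : Fin N → Prop} {S : ℕ → Prop}
    (hP : ∀ i j : Fin N, i ≤ j → P j → P i) (hS : ∀ v v', v ≤ v' → S v → S v')
    {a b : Fin N → ℕ} (h : BCRStep N a b) : cnt N P S a ≤ cnt N P S b := by
  classical
  obtain ⟨_, _, hcase⟩ := h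
  rw [cnt, cnt, Finset.card_filter, Finset.card_filter]
  rcases hcase with ⟨i, hlt, heq⟩ | ⟨i, j, hij, h1, h2, h3, heq⟩
  · apply Finset.sum_le_sum
    intro m _
    by_cases hm : m = i
    · subst hm
      by_cases hPm : P m ∧ S (a m)
      · rw [if_pos hPm, if_pos ⟨hPm.1, hS _ _ hlt.le hPm.2⟩]
      · exact le_trans (by rw [if_neg hPm]; omega) (le_refl _)
    · rw [heq m hm]
  · have hab : a i < a j := by omega
    apply sum_two_point _ _ i j hij.ne (fun m hm1 hm2 => by rw [heq m hm1 hm2])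
    rw [h1, h2]
    exact ite_pair_ineq _ _ _ _
      (fun hA => ⟨hA.1, hS _ _ hab.le hA.2⟩)
      (fun hB => ⟨hP i j hij.le hB.1, hB.2⟩)
      (fun hA hB => ⟨hB.1, hA.2⟩)

lemma cnt_le {P : Fin N → Prop} {S : ℕ → Prop}
    (hP : ∀ i j : Fin N, i ≤ j → P j → P i) (hS : ∀ v v', v ≤ v' → S v → S v')
    {a b : Fin N → ℕ} (h : BCRle N a b) : cnt N P S a ≤ cnt N P S b := by
  induction h with
  | refl => exact le_refl _
  | tail _ hstep ih => exact le_trans ih (cnt_step_le hP hS hstep)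

end Count

section Between
variable {n : ℕ}

lemma secondHalf_card (n : ℕ) :
    (Finset.univ.filter (fun i : Fin (2 * n) => n ≤ (i : ℕ))).card = n := by
  classical
  have hinj : Function.Injective (emb (n := n)) := by
    intro i j h
    have := congrArg Fin.val h
    simp only [emb] at this
    exact Fin.ext (by omega)
  have hset : (Finset.univ.filter (fun i : Fin (2 * n) => n ≤ (i : ℕ)))
      = Finset.map ⟨emb, hinj⟩ Finset.univ := by
    ext k
    simp only [Finset.mem_filter, Finset.mem_univ, true_and, Finset.mem_map,
      Function.Embedding.coeFn_mk]
    constructor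
    · intro hk
      exact ⟨⟨(k : ℕ) - n, by have := k.isLt; omega⟩, emb_sub hk⟩
    · rintro ⟨i, rfl⟩
      simp [emb]
  rw [hset, Finset.card_map, Finset.card_univ, Fintype.card_fin]

lemma between_eq_iotaPerm {x : Fin (2 * n) → ℕ} (hx : IsRook (2 * n) x)
    (h1 : BCRle (2 * n) (iota n (idRook n)) x)
    (h2 : BCRle (2 * n) x (iota n (lastRook n))) :
    ∃ w : Equiv.Perm (Fin n), x = iota n (permRook n w) := by
  -- invariant A: no nonzero entries in the first half
  have hA := cnt_le (P := fun i : Fin (2 * n) => (i : ℕ) < n) (S := fun v => v ≠ 0)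
    (fun i j hij hj => by omega) (fun v v' hv h0 => by omega) h2
  have hAlast : cnt (2 * n) (fun i : Fin (2 * n) => (i : ℕ) < n) (fun v => v ≠ 0)
      (iota n (lastRook n)) = 0 := by
    rw [cnt, Finset.card_eq_zero]
    apply Finset.eq_empty_iff_forall_notMem.mpr
    intro i hi
    simp only [Finset.mem_filter, Finset.mem_univ, true_and] at hi
    exact hi.2 (iota_lt _ hi.1)
  rw [hAlast, Nat.le_zero] at hA
  have hzero : ∀ i : Fin (2 * n), (i : ℕ) < n → x i = 0 := by
    intro i hi
    by_contra hne
    have hpos : 0 < cnt (2 * n) (fun i : Fin (2 * n) => (i : ℕ) < n) (fun v => v ≠ 0) x := by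
      rw [cnt]
      refine Finset.card_pos.mpr ⟨i, ?_⟩
      simp only [Finset.mem_filter, Finset.mem_univ, true_and]
      exact ⟨hi, hne⟩
    omega
  -- invariant B: all entries at most n
  have hB := cnt_le (P := fun _ : Fin (2 * n) => True) (S := fun v => n + 1 ≤ v)
    (fun i j hij hj => trivial) (fun v v' hv h0 => by omega) h2
  have hBlast : cnt (2 * n) (fun _ : Fin (2 * n) => True) (fun v => n + 1 ≤ v)
      (iota n (lastRook n)) = 0 := by
    rw [cnt, Finset.card_eq_zero]
    apply Finset.eq_empty_iff_forall_notMem.mpr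
    intro i hi
    simp only [Finset.mem_filter, Finset.mem_univ, true_and] at hi
    have hge := hi
    by_cases hi : n ≤ (i : ℕ)
    · rw [iota_ge _ hi] at hge; simp only [lastRook] at hge; omega
    · rw [iota_lt _ (by omega)] at hge; omega
  rw [hBlast, Nat.le_zero] at hB
  have hbound : ∀ i : Fin (2 * n), x i ≤ n := by
    intro i
    by_contra hne
    have hpos : 0 < cnt (2 * n) (fun _ : Fin (2 * n) => True) (fun v => n + 1 ≤ v) x := by
      rw [cnt]
      refine Finset.card_pos.mpr ⟨i, ?_⟩
      simp only [Finset.mem_filter, Finset.mem_univ, true_and]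
      omega
    omega
  -- invariant C: at least n nonzero entries
  have hC := cnt_le (P := fun _ : Fin (2 * n) => True) (S := fun v => v ≠ 0)
    (fun i j hij hj => trivial) (fun v v' hv h0 => by omega) h1
  have hCid : cnt (2 * n) (fun _ : Fin (2 * n) => True) (fun v => v ≠ 0)
      (iota n (idRook n)) = n := by
    rw [cnt]
    conv_rhs => rw [← secondHalf_card n]
    refine congrArg Finset.card ?_
    ext k
    simp only [Finset.mem_filter, Finset.mem_univ, true_and]
    constructor
    · intro hne
      by_contra hc
      exact hne (iota_lt _ (by omega))
    · intro hk
      rw [iota_ge _ hk]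
      simp [idRook]
  rw [hCid] at hC
  have hnonzero : ∀ i : Fin (2 * n), n ≤ (i : ℕ) → x i ≠ 0 := by
    intro i0 hi0 hxi0
    have hn : 1 ≤ n := by have := i0.isLt; omega
    have hle : cnt (2 * n) (fun _ : Fin (2 * n) => True) (fun v => v ≠ 0) x ≤ n - 1 := by
      rw [cnt]
      refine le_trans (Finset.card_le_card
        (t := (Finset.univ.filter fun i : Fin (2 * n) => n ≤ (i : ℕ)).erase i0) ?_) ?_
      · intro m hm
        simp only [Finset.mem_filter, Finset.mem_univ, true_and] at hm
        refine Finset.mem_erase.mpr ⟨?_, ?_⟩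
        · rintro rfl; exact hm hxi0
        · simp only [Finset.mem_filter, Finset.mem_univ, true_and]
          by_contra hc
          exact hm (hzero m (by omega))
      · rw [Finset.card_erase_of_mem (by
          simp only [Finset.mem_filter, Finset.mem_univ, true_and]; exact hi0),
          secondHalf_card]
    omega
  -- assemble the permutation
  set a : Fin n → ℕ := fun i => x (emb i) with ha
  have hembge : ∀ i : Fin n, n ≤ ((emb i : Fin (2 * n)) : ℕ) := by
    intro i; simp [emb]
  have hPa : PRook n a := by
    constructor
    · intro i
      have h1' := hnonzero (emb i) (hembge i)
      have h2' := hbound (emb i)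
      simp only [ha]
      omega
    · intro i j hij
      have h1' := hnonzero (emb i) (hembge i)
      have heq := hx.2 (emb i) (emb j) h1' hij
      have := congrArg Fin.val heq
      simp only [emb] at this
      exact Fin.ext (by omega)
  obtain ⟨w, hw⟩ := pRook_exists_perm hPa
  refine ⟨w, ?_⟩
  rw [← hw]
  funext i
  by_cases hi : n ≤ (i : ℕ)
  · rw [iota_ge _ hi, ha]
    congr 1
    exact (emb_sub hi).symm
  · rw [iota_lt _ (by omega)]
    exact hzero i (by omega)

end Between

section Main
variable {n : ℕ}

lemma permRook_injective : Function.Injective (permRook n) := by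
  intro w w' h
  apply Equiv.ext
  intro i
  have := congrFun h i
  simp only [permRook] at this
  exact Fin.ext (by omega)

lemma chain_unlift (τ : Equiv.Perm (Fin n)) :
    ∀ x : Fin (2 * n) → ℕ, BCRle (2 * n) x (iota n (permRook n τ)) →
      ∀ σ : Equiv.Perm (Fin n), x = iota n (permRook n σ) →
      BCRle n (permRook n σ) (permRook n τ) := by
  intro x h
  induction h using Relation.ReflTransGen.head_induction_on with
  | refl =>
    intro σ hσ
    have he := iota_injective hσ
    rw [← he]
    exact Relation.ReflTransGen.refl
  | head h' hrest ih =>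
    intro σ hσ
    subst hσ
    have hcIsRook : IsRook (2 * n) _ := h'.2.1
    have hid : BCRle (2 * n) (iota n (idRook n)) _ :=
      Relation.ReflTransGen.tail (le_iota (id_le_pRook (pRook_permRook n σ))) h'
    have hlast : BCRle (2 * n) _ (iota n (lastRook n)) :=
      Relation.ReflTransGen.trans hrest (le_iota (pRook_le_last (pRook_permRook n τ)))
    obtain ⟨ρ, hρ⟩ := between_eq_iotaPerm hcIsRook hid hlast
    rw [hρ] at h'
    have hstep : BCRStep n (permRook n σ) (permRook n ρ) :=
      step_unlift (pRook_permRook n σ).isRook (pRook_permRook n ρ).isRook h'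
    exact Relation.ReflTransGen.head hstep (ih ρ hρ)

end Main

/-- a `2n`-rook `x` satisfies `ι(id) ≤ x ≤ ι(w₀)` iff `x = ι(w)`
for some permutation `w` of `{1,…,n}`; consequently the interval
`[ι(id), ι(w₀)]` in the poset of `2n`-rooks is order-isomorphic to the
symmetric group `S_n` with the restriction of the Bruhat–Chevalley–Renner
order (the Bruhat order). -/
theorem stmt14 (n : ℕ) :
    (∀ x : Fin (2 * n) → ℕ, IsRook (2 * n) x →
      ((BCRle (2 * n) (iota n (idRook n)) x ∧ BCRle (2 * n) x (iota n (lastRook n))) ↔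
        ∃ w : Equiv.Perm (Fin n), x = iota n (permRook n w))) ∧
    ∃ F : {x : Fin (2 * n) → ℕ // IsRook (2 * n) x ∧
            BCRle (2 * n) (iota n (idRook n)) x ∧ BCRle (2 * n) x (iota n (lastRook n))}
          ≃ Equiv.Perm (Fin n),
      ∀ a b, BCRle (2 * n) a.val b.val ↔ BCRle n (permRook n (F a)) (permRook n (F b)) := by
  constructor
  · intro x hx
    constructor
    · rintro ⟨h1, h2⟩
      exact between_eq_iotaPerm hx h1 h2
    · rintro ⟨w, rfl⟩
      exact ⟨le_iota (id_le_pRook (pRook_permRook n w)),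
        le_iota (pRook_le_last (pRook_permRook n w))⟩
  · set G : Equiv.Perm (Fin n) →
        {x : Fin (2 * n) → ℕ // IsRook (2 * n) x ∧
          BCRle (2 * n) (iota n (idRook n)) x ∧ BCRle (2 * n) x (iota n (lastRook n))} :=
      fun w => ⟨iota n (permRook n w), isRook_iota (pRook_permRook n w).isRook,
        le_iota (id_le_pRook (pRook_permRook n w)),
        le_iota (pRook_le_last (pRook_permRook n w))⟩ with hG
    have hbij : Function.Bijective G := by
      constructor
      · intro w w' h
        have : iota n (permRook n w) = iota n (permRook n w') := congrArg Subtype.val h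
        exact permRook_injective (iota_injective this)
      · rintro ⟨x, hx, h1, h2⟩
        obtain ⟨w, hw⟩ := between_eq_iotaPerm hx h1 h2
        exact ⟨w, Subtype.ext hw.symm⟩
    refine ⟨(Equiv.ofBijective G hbij).symm, ?_⟩
    intro a b
    have ha : iota n (permRook n ((Equiv.ofBijective G hbij).symm a)) = a.val :=
      congrArg Subtype.val ((Equiv.ofBijective G hbij).apply_symm_apply a)
    have hb : iota n (permRook n ((Equiv.ofBijective G hbij).symm b)) = b.val :=
      congrArg Subtype.val ((Equiv.ofBijective G hbij).apply_symm_apply b)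
    constructor
    · intro h
      rw [← hb] at h
      exact chain_unlift _ _ h _ ha.symm
    · intro h
      have h2 := le_iota h
      rw [ha, hb] at h2
      exact h2
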